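/- Let F be an algebraically closed field of characteristic p > 2 and β ∈ F nonzero. Let A be the unital associative F-algebra with generators X, Y and the single defining relation XY − YX = β, and set t = YX in A. Let V be a simple A-module possessing a vector w₀ with V = A·w₀ and X·w₀ = ζ·w₀ for some nonzero ζ ∈ F. Then dim_F V = p, and there exist λ ∈ F and a basis v₀, …, v_{p−1} of V such that (reading subscripts modulo p) t·v_k = (λ − kβ)·v_k, X·v_k = ζ·v_{k+1}, and Y·v_k = ζ^{−1}(λ − (k−1)β)·v_{k−1}. Moreover, the vector w = v₀ + v₁ + ⋯ + v_{p−1} satisfies V = A·w and X·w = ζ·w, and the ideal {f ∈ F[x] : f(t)·w = 0} of F[x] is generated by x^p − β^{p−1}x − (λ^p − β^{p−1}λ). -/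

import Mathlib

open Polynomial

universe u v

/-- The defining relation `XY − YX = β`, i.e. `XY = YX + β`
(here `true ↦ X`, `false ↦ Y`). -/
inductive WRel (F : Type u) [Field F] (β : F) :
    FreeAlgebra F Bool → FreeAlgebra F Bool → Prop
  | rel : WRel F β
      (FreeAlgebra.ι F true * FreeAlgebra.ι F false)
      (FreeAlgebra.ι F false * FreeAlgebra.ι F true +
        algebraMap F (FreeAlgebra F Bool) β)

/-- The `F`-algebra with generators `X, Y` and defining relation `XY − YX = β`. -/
abbrev WAlgebra (F : Type u) [Field F] (β : F) := RingQuot (WRel F β)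

/-- The generator `X`. -/
noncomputable def waX (F : Type u) [Field F] (β : F) : WAlgebra F β :=
  RingQuot.mkAlgHom F (WRel F β) (FreeAlgebra.ι F true)

/-- The generator `Y`. -/
noncomputable def waY (F : Type u) [Field F] (β : F) : WAlgebra F β :=
  RingQuot.mkAlgHom F (WRel F β) (FreeAlgebra.ι F false)

/-- The element `t = YX`. -/
noncomputable def waT (F : Type u) [Field F] (β : F) : WAlgebra F β :=
  waY F β * waX F β

section Aux

variable {F : Type u} [Field F] {β : F}

lemma wa_rel : waX F β * waY F β = waY F β * waX F β + algebraMap F (WAlgebra F β) β := by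
  have h := RingQuot.mkAlgHom_rel F (WRel.rel (F := F) (β := β))
  simpa [waX, waY, map_mul, map_add, AlgHom.commutes] using h

lemma waX_mul_waT : waX F β * waT F β = (waT F β + algebraMap F (WAlgebra F β) β) * waX F β := by
  rw [waT, ← mul_assoc, wa_rel]

lemma waT_mul_waY : waT F β * waY F β = waY F β * (waT F β + algebraMap F (WAlgebra F β) β) := by
  rw [waT, mul_assoc, wa_rel]

/-- If `a * x = y * a` then `a * f(x) = f(y) * a`. -/
lemma mul_aeval_of_semiconj {A : Type*} [Ring A] [Algebra F A] {a x y : A}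
    (h : a * x = y * a) (f : F[X]) : a * aeval x f = aeval y f * a := by
  induction f using Polynomial.induction_on with
  | C c => simp [Algebra.commutes]
  | add f g hf hg => simp [mul_add, add_mul, hf, hg]
  | monomial n c ih =>
      have hz : ∀ z : A, aeval z ((C c : F[X]) * X ^ (n + 1)) = aeval z (C c * X ^ n) * z :=
        fun z => by rw [pow_succ, ← mul_assoc, map_mul, aeval_X]
      rw [hz x, hz y, ← mul_assoc, ih, mul_assoc, h, ← mul_assoc]

lemma waX_mul_aeval (f : F[X]) :
    waX F β * aeval (waT F β) f = aeval (waT F β) (f.comp (X + C β)) * waX F β := by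
  rw [aeval_comp]
  have : aeval (waT F β) (X + C β) = waT F β + algebraMap F (WAlgebra F β) β := by simp
  rw [this]
  exact mul_aeval_of_semiconj waX_mul_waT f

/-- If `x * a = a * y` then `f(x) * a = a * f(y)`. -/
lemma aeval_mul_of_semiconj {A : Type*} [Ring A] [Algebra F A] {a x y : A}
    (h : x * a = a * y) (f : F[X]) : aeval x f * a = a * aeval y f := by
  induction f using Polynomial.induction_on with
  | C c => simp [Algebra.commutes]
  | add f g hf hg => simp [mul_add, add_mul, hf, hg]
  | monomial n c ih =>
      have hz : ∀ z : A, aeval z ((C c : F[X]) * X ^ (n + 1)) = z * aeval z (C c * X ^ n) :=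
        fun z => by
          simp only [map_mul, aeval_C, aeval_X_pow]
          rw [← mul_assoc, ← Algebra.commutes c z, mul_assoc, ← pow_succ']
      rw [hz x, hz y, mul_assoc, ih, ← mul_assoc, h, mul_assoc]

lemma aeval_mul_waY (f : F[X]) :
    aeval (waT F β) f * waY F β = waY F β * aeval (waT F β) (f.comp (X + C β)) := by
  rw [aeval_comp]
  have : aeval (waT F β) (X + C β) = waT F β + algebraMap F (WAlgebra F β) β := by simp
  rw [this]
  exact aeval_mul_of_semiconj waT_mul_waY f

lemma wa_adjoin : Algebra.adjoin F {waX F β, waY F β} = ⊤ := by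
  have h1 : Algebra.adjoin F (Set.range (FreeAlgebra.ι F : Bool → FreeAlgebra F Bool)) = ⊤ :=
    FreeAlgebra.adjoin_range_ι F Bool
  have hsurj := RingQuot.mkAlgHom_surjective F (WRel F β)
  have h2 : (Algebra.adjoin F (Set.range (FreeAlgebra.ι F : Bool → FreeAlgebra F Bool))).map
      (RingQuot.mkAlgHom F (WRel F β)) = ⊤ := by
    rw [h1, Algebra.map_top, (AlgHom.range_eq_top _).mpr hsurj]
  rw [AlgHom.map_adjoin] at h2
  rw [← h2]
  congr 1
  rw [← Set.range_comp]
  ext a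
  constructor
  · rintro (rfl | rfl)
    · exact ⟨true, rfl⟩
    · exact ⟨false, rfl⟩
  · rintro ⟨b, rfl⟩
    cases b
    · right; rfl
    · left; rfl

end Aux

section Mod

variable {F : Type u} [Field F] {β : F}
  {V : Type v} [AddCommGroup V] [Module (WAlgebra F β) V] [Module F V]
  [IsScalarTower F (WAlgebra F β) V]

lemma wsmul_comm (c : F) (a : WAlgebra F β) (v : V) : a • c • v = c • a • v := by
  rw [← algebraMap_smul (WAlgebra F β) c v, ← mul_smul, ← Algebra.commutes, mul_smul,
    algebraMap_smul]

lemma smul_mem_of_stable (W : Submodule F V) (hXW : ∀ v ∈ W, waX F β • v ∈ W)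
    (hYW : ∀ v ∈ W, waY F β • v ∈ W) (a : WAlgebra F β) {v : V} (hv : v ∈ W) :
    a • v ∈ W := by
  let S : Subalgebra F (WAlgebra F β) :=
    { carrier := {a : WAlgebra F β | ∀ v ∈ W, a • v ∈ W}
      mul_mem' := fun {x y} hx hy v hv => by rw [mul_smul]; exact hx _ (hy v hv)
      one_mem' := fun v hv => by rwa [one_smul]
      add_mem' := fun {x y} hx hy v hv => by
        rw [add_smul]; exact W.add_mem (hx v hv) (hy v hv)
      algebraMap_mem' := fun r v hv => by
        rw [algebraMap_smul]; exact W.smul_mem r hv }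
  have hS : (⊤ : Subalgebra F (WAlgebra F β)) ≤ S := by
    rw [← wa_adjoin]
    refine Algebra.adjoin_le ?_
    rintro z (rfl | rfl)
    · exact hXW
    · exact hYW
  exact hS (by trivial) v hv

lemma stable_bot_or_top (hsimple : IsSimpleModule (WAlgebra F β) V) (W : Submodule F V)
    (hXW : ∀ v ∈ W, waX F β • v ∈ W) (hYW : ∀ v ∈ W, waY F β • v ∈ W) :
    (∀ v ∈ W, v = (0 : V)) ∨ ∀ v : V, v ∈ W := by
  haveI := hsimple
  let N : Submodule (WAlgebra F β) V :=
    { carrier := (W : Set V)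
      add_mem' := fun h1 h2 => W.add_mem h1 h2
      zero_mem' := W.zero_mem
      smul_mem' := fun a v hv => smul_mem_of_stable W hXW hYW a hv }
  rcases eq_bot_or_eq_top N with h | h
  · left
    intro v hv
    have hvN : v ∈ N := hv
    rw [h] at hvN
    simpa using hvN
  · right
    intro v
    have hvN : v ∈ N := by rw [h]; trivial
    exact hvN

end Mod

/-- The image of the ideal `(q)` in `V` under `f ↦ f(t) • w₀`. -/
noncomputable def qSub {F : Type u} [Field F] (β : F) {V : Type v} [AddCommGroup V]
    [Module (WAlgebra F β) V] [Module F V] [IsScalarTower F (WAlgebra F β) V]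
    (w₀ : V) (q : F[X]) : Submodule F V where
  carrier := {v : V | ∃ h : F[X], aeval (waT F β) (q * h) • w₀ = v}
  add_mem' := by
    rintro _ _ ⟨h1, rfl⟩ ⟨h2, rfl⟩
    exact ⟨h1 + h2, by rw [mul_add, map_add, add_smul]⟩
  zero_mem' := ⟨0, by simp⟩
  smul_mem' := by
    rintro c _ ⟨h, rfl⟩
    refine ⟨C c * h, ?_⟩
    rw [show q * (C c * h) = C c * (q * h) by ring, map_mul, aeval_C, mul_smul,
      algebraMap_smul]

lemma qSub_mem {F : Type u} [Field F] {β : F} {V : Type v} [AddCommGroup V]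
    [Module (WAlgebra F β) V] [Module F V] [IsScalarTower F (WAlgebra F β) V]
    {w₀ : V} {q : F[X]} {v : V} :
    v ∈ qSub β w₀ q ↔ ∃ h : F[X], aeval (waT F β) (q * h) • w₀ = v := Iff.rfl

/-- Over an algebraically closed field of characteristic `p > 2`, a
simple Whittaker module of type `ζ` for the algebra `XY − YX = β` (`β ≠ 0`) has
dimension `p`, with a basis `v₀, …, v_{p−1}` (indices mod `p`) on which
`t·v_k = (λ − kβ)·v_k`, `X·v_k = ζ·v_{k+1}`, `Y·v_k = ζ⁻¹(λ − (k−1)β)·v_{k−1}`;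
moreover `w = v₀ + ⋯ + v_{p−1}` is a cyclic Whittaker vector of type `ζ`, and the ideal
`{f ∈ F[x] : f(t)·w = 0}` is generated by `x^p − β^{p−1}x − (λ^p − β^{p−1}λ)`. -/
theorem stmt_11 {F : Type u} [Field F] [IsAlgClosed F]
    (p : ℕ) [Fact p.Prime] [CharP F p] (hp : 2 < p)
    (β : F) (hβ : β ≠ 0) (ζ : F) (hζ : ζ ≠ 0)
    (V : Type v) [AddCommGroup V] [Module (WAlgebra F β) V]
    [Module F V] [IsScalarTower F (WAlgebra F β) V]
    (hsimple : IsSimpleModule (WAlgebra F β) V)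
    (w₀ : V) (hcyc : ∀ v : V, ∃ a : WAlgebra F β, a • w₀ = v)
    (hX : waX F β • w₀ = ζ • w₀) :
    Module.finrank F V = p ∧
    ∃ (lam : F) (u : ℕ → V),
      (∀ k : ℕ, u (k + p) = u k) ∧
      (∃ b : Module.Basis (Fin p) F V, ∀ k : Fin p, b k = u (k : ℕ)) ∧
      (∀ k : ℕ,
        waT F β • u k = (lam - (k : F) * β) • u k ∧
        waX F β • u k = ζ • u (k + 1) ∧
        waY F β • u (k + 1) = (ζ⁻¹ * (lam - (k : F) * β)) • u k) ∧
      (∀ v : V, ∃ a : WAlgebra F β, a • (∑ k ∈ Finset.range p, u k) = v) ∧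
      waX F β • (∑ k ∈ Finset.range p, u k) = ζ • (∑ k ∈ Finset.range p, u k) ∧
      (∀ f : Polynomial F,
        Polynomial.aeval (waT F β) f • (∑ k ∈ Finset.range p, u k) = 0 ↔
          f ∈ Ideal.span {X ^ p - C (β ^ (p - 1)) * X -
            C (lam ^ p - β ^ (p - 1) * lam)}) := by
  classical
  haveI := hsimple
  have hpp : p.Prime := Fact.out
  have hp0 : p ≠ 0 := hpp.ne_zero
  have hp1 : 1 ≤ p := hpp.one_lt.le
  haveI : Nontrivial V := by
    by_contra h
    rw [not_nontrivial_iff_subsingleton] at h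
    exact (bot_ne_top : (⊥ : Submodule (WAlgebra F β) V) ≠ ⊤) (Subsingleton.elim _ _)
  have hw₀ : w₀ ≠ 0 := by
    intro h
    obtain ⟨v, hv⟩ := exists_ne (0 : V)
    obtain ⟨a, ha⟩ := hcyc v
    rw [h, smul_zero] at ha
    exact hv ha.symm
  have hYw₀ : waY F β • w₀ = ζ⁻¹ • waT F β • w₀ := by
    have h1 : waT F β • w₀ = ζ • waY F β • w₀ := by
      rw [waT, mul_smul, hX, wsmul_comm]
    rw [h1, inv_smul_smul₀ hζ]
  have hφX : ∀ f : F[X], waX F β • (aeval (waT F β) f • w₀)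
      = ζ • (aeval (waT F β) (f.comp (X + C β)) • w₀) := by
    intro f
    rw [← mul_smul, waX_mul_aeval, mul_smul, hX, wsmul_comm]
  have hφY : ∀ f : F[X], waY F β • (aeval (waT F β) (f.comp (X + C β)) • w₀)
      = ζ⁻¹ • (aeval (waT F β) (f * X) • w₀) := by
    intro f
    rw [← mul_smul, ← aeval_mul_waY, mul_smul, hYw₀, wsmul_comm, ← mul_smul,
      show aeval (waT F β) f * waT F β = aeval (waT F β) (f * X) by rw [map_mul, aeval_X]]
  have heig : ∀ (c : F) (v : V), waT F β • v = c • v →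
      ∀ f : F[X], aeval (waT F β) f • v = f.eval c • v := by
    intro c v hv f
    induction f using Polynomial.induction_on with
    | C r => rw [aeval_C, eval_C, algebraMap_smul]
    | add f g hf hg => rw [map_add, add_smul, hf, hg, eval_add, add_smul]
    | monomial n r ih =>
        rw [show (C r : F[X]) * X ^ (n + 1) = C r * X ^ n * X by ring, map_mul, aeval_X,
          mul_smul, hv, wsmul_comm, ih, smul_smul]
        conv_rhs => rw [eval_mul, eval_X]
        rw [mul_comm]
  -- the dichotomy coming from simplicity
  have hdich : ∀ q : F[X], q.comp (X + C β) = q →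
      aeval (waT F β) q • w₀ = 0 ∨ ∃ h : F[X], aeval (waT F β) (q * h) • w₀ = w₀ := by
    intro q hq
    have hXcomp : (X - C β).comp (X + C β) = (X : F[X]) := by
      rw [sub_comp, X_comp, C_comp, add_sub_cancel_right]
    have hXcomp2 : (X + C β).comp (X - C β) = (X : F[X]) := by
      rw [add_comp, X_comp, C_comp, sub_add_cancel]
    have hqm : q.comp (X - C β) = q := by
      conv_lhs => rw [← hq]
      rw [comp_assoc, hXcomp2, comp_X]
    have hXs : ∀ v ∈ qSub β w₀ q, waX F β • v ∈ qSub β w₀ q := by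
      rintro _ ⟨h, rfl⟩
      refine ⟨C ζ * h.comp (X + C β), ?_⟩
      rw [show q * (C ζ * h.comp (X + C β)) = C ζ * (q * h.comp (X + C β)) by ring,
        map_mul, aeval_C, mul_smul, algebraMap_smul, hφX (q * h), mul_comp, hq]
    have hYs : ∀ v ∈ qSub β w₀ q, waY F β • v ∈ qSub β w₀ q := by
      rintro _ ⟨h, rfl⟩
      refine ⟨C ζ⁻¹ * (h.comp (X - C β) * X), ?_⟩
      have h2 := hφY ((q * h).comp (X - C β))
      rw [comp_assoc, hXcomp, comp_X] at h2
      rw [h2, mul_comp, hqm,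
        show q * (C ζ⁻¹ * (h.comp (X - C β) * X)) = C ζ⁻¹ * (q * h.comp (X - C β) * X) by ring,
        map_mul, aeval_C, mul_smul, algebraMap_smul, mul_assoc]
    rcases stable_bot_or_top hsimple (qSub β w₀ q) hXs hYs with h | h
    · left
      have := h _ ⟨1, rfl⟩
      rwa [mul_one] at this
    · right
      exact h w₀
  -- the annihilator ideal of `w₀`
  let I : Ideal F[X] :=
    { carrier := {f : F[X] | aeval (waT F β) f • w₀ = 0}
      add_mem' := fun {f g} hf hg => by
        have hf' : aeval (waT F β) f • w₀ = 0 := hf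
        have hg' : aeval (waT F β) g • w₀ = 0 := hg
        show aeval (waT F β) (f + g) • w₀ = 0
        rw [map_add, add_smul, hf', hg', add_zero]
      zero_mem' := by show aeval (waT F β) 0 • w₀ = 0; rw [map_zero, zero_smul]
      smul_mem' := fun q f hf => by
        have hf' : aeval (waT F β) f • w₀ = 0 := hf
        show aeval (waT F β) (q • f) • w₀ = 0
        rw [smul_eq_mul, map_mul, mul_smul, hf', smul_zero] }
  have hImem : ∀ f : F[X], f ∈ I ↔ aeval (waT F β) f • w₀ = 0 := fun f => Iff.rfl
  have hIshift : ∀ f ∈ I, f.comp (X + C β) ∈ I := by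
    intro f hf
    rw [hImem] at hf ⊢
    have h2 : ζ • (aeval (waT F β) (f.comp (X + C β)) • w₀) = 0 := by
      rw [← hφX f, hf, smul_zero]
    have h3 := congrArg (fun z : V => ζ⁻¹ • z) h2
    simpa [inv_smul_smul₀ hζ] using h3
  -- the invariant polynomial σ
  set σp : F[X] := X ^ p - C (β ^ (p - 1)) * X with hσdef
  have hββ : C (β ^ (p - 1)) * C β = (C (β ^ p) : F[X]) := by
    rw [← C_mul, ← pow_succ, Nat.sub_add_cancel hp1]
  have hσcomp : σp.comp (X + C β) = σp := by
    rw [hσdef, sub_comp, pow_comp, X_comp, mul_comp, C_comp, X_comp, add_pow_char,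
      ← C_pow]
    linear_combination -hββ
  have hdeg1 : degree (C (β ^ (p - 1)) * X : F[X]) ≤ 1 := by
    simpa using degree_linear_le (a := β ^ (p - 1)) (b := 0)
  have h1p : (1 : WithBot ℕ) < (p : ℕ) := by exact_mod_cast hpp.one_lt
  have hσmonic : σp.Monic := monic_X_pow_sub (lt_of_le_of_lt hdeg1 h1p)
  have hInebot : ∃ f ∈ I, f ≠ 0 := by
    rcases hdich σp hσcomp with h | ⟨h, hh⟩
    · exact ⟨σp, (hImem σp).mpr h, hσmonic.ne_zero⟩
    · refine ⟨σp * h - 1, ?_, ?_⟩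
      · rw [hImem, map_sub, map_one, sub_smul, one_smul, hh, sub_self]
      · intro h0
        have h1 : σp * h = 1 := by rwa [sub_eq_zero] at h0
        have hu : IsUnit σp := ⟨⟨σp, h, h1, (mul_comm h σp).trans h1⟩, rfl⟩
        have := natDegree_eq_zero_of_isUnit hu
        have hσnat : σp.natDegree = p := by
          have hd : σp.degree = (p : WithBot ℕ) := by
            rw [hσdef]
            rw [degree_sub_eq_left_of_degree_lt, degree_X_pow]
            rw [degree_X_pow]
            exact lt_of_le_of_lt hdeg1 h1p
          exact natDegree_eq_of_degree_eq_some hd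
        omega
  -- generator of the annihilator ideal
  have hIP : I.IsPrincipal := IsPrincipalIdealRing.principal I
  obtain ⟨g, hg⟩ := hIP
  have hgdvd : ∀ f : F[X], f ∈ I ↔ g ∣ f := by
    intro f
    rw [hg]
    exact Ideal.mem_span_singleton
  have hg0 : g ≠ 0 := by
    obtain ⟨f, hfI, hf0⟩ := hInebot
    intro h
    rw [hgdvd, h] at hfI
    exact hf0 (zero_dvd_iff.mp hfI)
  have hgnotunit : ¬ IsUnit g := by
    intro hu
    have h1 : (1 : F[X]) ∈ I := (hgdvd 1).mpr hu.dvd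
    have := (hImem 1).mp h1
    rw [map_one, one_smul] at this
    exact hw₀ this
  have hgdeg : g.degree ≠ 0 := fun h => hgnotunit (isUnit_iff_degree_eq_zero.mpr h)
  obtain ⟨lam, hlam⟩ := IsAlgClosed.exists_root g hgdeg
  -- the `p` distinct eigenvalues
  set χ : ZMod p →+* F := ZMod.castHom (dvd_refl p) F with hχdef
  have hχinj : Function.Injective χ := ZMod.castHom_injective F
  set xr : ZMod p → F := fun a => lam - χ a * β with hxrdef
  have hxrinj : Function.Injective xr := by
    intro a b h
    apply hχinj
    have h2 : χ a * β = χ b * β := by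
      have := sub_right_injective h
      simpa [hxrdef] using h
    exact mul_right_cancel₀ hβ h2
  have hxsucc : ∀ a : ZMod p, xr (a + 1) = xr a - β := by
    intro a
    rw [hxrdef]
    simp only [map_add, map_one]
    ring
  have hχnat : ∀ k : ℕ, χ ((k : ZMod p)) = (k : F) := fun k => map_natCast χ k
  -- all `xr a` are roots of `g`
  have hshift : ∀ k : ℕ, g.comp (X + C ((k : F) * β)) ∈ I := by
    intro k
    induction k with
    | zero => simpa using (hgdvd g).mpr dvd_rfl
    | succ n ih =>
        have h2 := hIshift _ ih
        rw [comp_assoc] at h2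
        have h3 : (X + C ((n : F) * β)).comp (X + C β) = X + C (((n + 1 : ℕ) : F) * β) := by
          rw [add_comp, X_comp, C_comp]
          rw [show (((n + 1 : ℕ) : F) * β) = (n : F) * β + β by push_cast; ring, C_add]
          ring
        rwa [h3] at h2
  have hgroot : ∀ a : ZMod p, g.eval (xr a) = 0 := by
    intro a
    have hval : a.val ≤ p := (ZMod.val_lt a).le
    have hk : (((p - a.val : ℕ) : F) * β) = - (χ a * β) := by
      rw [Nat.cast_sub hval, CharP.cast_eq_zero F p]
      have : χ a = ((a.val : ℕ) : F) := by
        rw [hχdef]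
        simp [ZMod.castHom_apply, ZMod.natCast_val, ZMod.cast_id]
      rw [this]
      ring
    have hmem := hshift (p - a.val)
    rw [hgdvd] at hmem
    obtain ⟨q, hq⟩ := hmem
    have h4 := congrArg (eval lam) hq
    rw [eval_mul, eval_comp, eval_add, eval_X, eval_C, hk, hlam, zero_mul] at h4
    have : xr a = lam + - (χ a * β) := by rw [hxrdef]; ring
    rw [this, h4]
  -- the product polynomial `P` and the target generator `G`
  set P : F[X] := ∏ a : ZMod p, (X - C (xr a)) with hPdef
  have hcard : Fintype.card (ZMod p) = p := ZMod.card p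
  have hPmonic : P.Monic := monic_prod_of_monic _ _ fun a _ => monic_X_sub_C (xr a)
  have hPnat : P.natDegree = p := by
    rw [hPdef, natDegree_prod _ _ fun a _ => (monic_X_sub_C (xr a)).ne_zero]
    simp [natDegree_X_sub_C, hcard]
  have hPdeg : P.degree = (p : WithBot ℕ) := by
    rw [degree_eq_natDegree hPmonic.ne_zero, hPnat]
  have hPg : P ∣ g := by
    refine Finset.prod_dvd_of_coprime ?_ fun a _ => ?_
    · exact (pairwise_coprime_X_sub_C hxrinj).set_pairwise _
    · rw [dvd_iff_isRoot]; exact hgroot a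
  set μ : F := lam ^ p - β ^ (p - 1) * lam with hμdef
  set G : F[X] := X ^ p - C (β ^ (p - 1)) * X - C μ with hGdef
  have hββ' : β ^ (p - 1) * β = β ^ p := by rw [← pow_succ, Nat.sub_add_cancel hp1]
  have hGeval : ∀ a : ZMod p, G.eval (xr a) = 0 := by
    intro a
    have hχp : (χ a) ^ p = χ a := by rw [← map_pow, ZMod.pow_card]
    rw [hGdef]
    simp only [eval_sub, eval_pow, eval_mul, eval_C, eval_X, hxrdef]
    rw [sub_pow_char, mul_pow, hχp, hμdef]
    linear_combination (χ a) * hββ'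
  have hPeval : ∀ a : ZMod p, P.eval (xr a) = 0 := by
    intro a
    rw [hPdef, eval_prod]
    exact Finset.prod_eq_zero (Finset.mem_univ a) (by simp)
  have hGmonic : G.Monic := by
    rw [hGdef, sub_sub]
    exact monic_X_pow_sub (lt_of_le_of_lt degree_linear_le h1p)
  have hGdeg : G.degree = (p : WithBot ℕ) := by
    rw [hGdef, sub_sub, degree_sub_eq_left_of_degree_lt, degree_X_pow]
    rw [degree_X_pow]
    exact lt_of_le_of_lt degree_linear_le h1p
  have hGnat : G.natDegree = p := natDegree_eq_of_degree_eq_some hGdeg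
  have hPG : P = G := by
    by_cases hd : G - P = 0
    · exact (sub_eq_zero.mp hd).symm
    · exfalso
      apply hd
      refine eq_zero_of_natDegree_lt_card_of_eval_eq_zero (G - P) hxrinj (fun a => ?_) ?_
      · rw [eval_sub, hGeval, hPeval, sub_zero]
      · rw [hcard]
        have hdlt : (G - P).degree < (p : WithBot ℕ) := by
          rw [← hGdeg]
          exact degree_sub_lt (hGdeg.trans hPdeg.symm) hGmonic.ne_zero
            (by rw [hGmonic.leadingCoeff, hPmonic.leadingCoeff])
        exact (natDegree_lt_iff_degree_lt hd).mpr hdlt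
  have hGcomp : G.comp (X + C β) = G := by
    rw [hGdef, sub_comp, sub_comp, pow_comp, X_comp, mul_comp, C_comp, X_comp, C_comp,
      add_pow_char, ← C_pow]
    linear_combination -hββ
  -- `P` annihilates `w₀`
  have hPI : aeval (waT F β) P • w₀ = 0 := by
    rcases hdich P (by rw [hPG]; exact hGcomp) with h | ⟨h, hh⟩
    · exact h
    · exfalso
      have h1 : P * h - 1 ∈ I := by
        rw [hImem, map_sub, map_one, sub_smul, one_smul, hh, sub_self]
      rw [hgdvd] at h1
      have h2 : P ∣ P * h - 1 := hPg.trans h1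
      have h3 : P ∣ 1 := by
        have := dvd_sub (dvd_mul_right P h) h2
        simpa using this
      have h4 := natDegree_eq_zero_of_isUnit (isUnit_of_dvd_one h3)
      rw [hPnat] at h4
      omega
  -- the Lagrange-type polynomials
  set e : ZMod p → F[X] := fun a => ∏ b ∈ Finset.univ.erase a, (X - C (xr b)) with hedef
  have hePa : ∀ a : ZMod p, (X - C (xr a)) * e a = P := by
    intro a
    rw [hedef, hPdef]
    exact Finset.mul_prod_erase Finset.univ (fun b => X - C (xr b)) (Finset.mem_univ a)
  have hemonic : ∀ a, (e a).Monic := fun a =>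
    monic_prod_of_monic _ _ fun b _ => monic_X_sub_C _
  have henat : ∀ a, (e a).natDegree = p - 1 := by
    intro a
    rw [hedef, natDegree_prod _ _ fun b _ => (monic_X_sub_C (xr b)).ne_zero]
    simp [Finset.card_erase_of_mem, hcard]
  have heeval : ∀ a b : ZMod p, b ≠ a → (e a).eval (xr b) = 0 := by
    intro a b hba
    rw [hedef, eval_prod]
    exact Finset.prod_eq_zero (Finset.mem_erase.mpr ⟨hba, Finset.mem_univ b⟩) (by simp)
  have hediag : ∀ a : ZMod p, (e a).eval (xr a) ≠ 0 := by
    intro a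
    rw [hedef, eval_prod]
    refine Finset.prod_ne_zero_iff.mpr fun b hb => ?_
    rw [eval_sub, eval_X, eval_C, sub_ne_zero]
    exact fun hx => (Finset.mem_erase.mp hb).1 (hxrinj hx.symm)
  have hfac : ∀ b : ZMod p, (X - C (xr b)).comp (X + C β) = X - C (xr (b + 1)) := by
    intro b
    simp only [sub_comp, X_comp, C_comp, hxsucc b, map_sub]
    ring
  have hecomp : ∀ a : ZMod p, (e a).comp (X + C β) = e (a + 1) := by
    intro a
    rw [hedef, prod_comp]
    refine Finset.prod_nbij' (fun b => b + 1) (fun c => c - 1) ?_ ?_ ?_ ?_ ?_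
    · intro b hb
      rw [Finset.mem_erase] at hb ⊢
      refine ⟨fun hc => hb.1 ?_, Finset.mem_univ _⟩
      exact add_right_cancel hc
    · intro c hc
      rw [Finset.mem_erase] at hc ⊢
      refine ⟨fun hc2 => hc.1 ?_, Finset.mem_univ _⟩
      rw [← hc2]; ring
    · intro b _
      ring
    · intro c _
      ring
    · intro b _
      simpa using hfac b
  -- the candidate basis vectors
  set u' : ZMod p → V := fun a => aeval (waT F β) (e a) • w₀ with hu'def
  have hXe : ∀ a : ZMod p, (X : F[X]) * e a = C (xr a) * e a + P := by
    intro a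
    rw [← hePa a]
    ring
  have hTu' : ∀ a : ZMod p, waT F β • u' a = xr a • u' a := by
    intro a
    rw [hu'def]
    rw [← mul_smul]
    rw [show waT F β * aeval (waT F β) (e a) = aeval (waT F β) (C (xr a) * e a + P) by
      rw [← hXe a, map_mul, aeval_X]]
    rw [map_add, add_smul, hPI, add_zero, map_mul, aeval_C, mul_smul, algebraMap_smul]
  have hu'ne : ∀ a : ZMod p, u' a ≠ 0 := by
    intro a h0
    have heI : e a ∈ I := (hImem _).mpr h0
    rw [hgdvd] at heI
    have hPe : P ∣ e a := hPg.trans heI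
    have hne : e a ≠ 0 := (hemonic a).ne_zero
    have hle := natDegree_le_of_dvd hPe hne
    rw [hPnat, henat] at hle
    omega
  have hXu' : ∀ a : ZMod p, waX F β • u' a = ζ • u' (a + 1) := by
    intro a
    rw [hu'def, hφX (e a), hecomp a]
  have hYu' : ∀ a : ZMod p, waY F β • u' (a + 1) = (ζ⁻¹ * xr a) • u' a := by
    intro a
    have h2 := hφY (e a)
    rw [hecomp a] at h2
    rw [hu'def, h2]
    rw [show (e a) * X = C (xr a) * e a + P by rw [← hXe a]; ring,
      map_add, add_smul, hPI, add_zero, map_mul, aeval_C, mul_smul, algebraMap_smul,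
      smul_smul]
  -- the span of the `u'` is everything, by simplicity
  set U : Submodule F V := Submodule.span F (Set.range u') with hUdef
  have hu'U : ∀ a : ZMod p, u' a ∈ U := fun a => Submodule.subset_span ⟨a, rfl⟩
  have hXU : ∀ v ∈ U, waX F β • v ∈ U := by
    intro v hv
    induction hv using Submodule.span_induction with
    | mem x hx =>
        obtain ⟨a, rfl⟩ := hx
        rw [hXu' a]
        exact U.smul_mem _ (hu'U _)
    | zero => rw [smul_zero]; exact U.zero_mem
    | add x y _ _ hx hy => rw [smul_add]; exact U.add_mem hx hy
    | smul c x _ hx => rw [wsmul_comm]; exact U.smul_mem _ hx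
  have hYU : ∀ v ∈ U, waY F β • v ∈ U := by
    intro v hv
    induction hv using Submodule.span_induction with
    | mem x hx =>
        obtain ⟨a, rfl⟩ := hx
        have h2 := hYu' (a - 1)
        rw [sub_add_cancel] at h2
        rw [h2]
        exact U.smul_mem _ (hu'U _)
    | zero => rw [smul_zero]; exact U.zero_mem
    | add x y _ _ hx hy => rw [smul_add]; exact U.add_mem hx hy
    | smul c x _ hx => rw [wsmul_comm]; exact U.smul_mem _ hx
  have hUtop : ∀ v : V, v ∈ U := by
    rcases stable_bot_or_top hsimple U hXU hYU with h | h
    · exact absurd (h _ (hu'U 0)) (hu'ne 0)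
    · exact h
  -- linear independence via eigenvalues
  set Tend : Module.End F V :=
    { toFun := fun v => waT F β • v
      map_add' := fun v w => smul_add _ v w
      map_smul' := fun c v => by simpa using wsmul_comm c (waT F β) v } with hTdef
  have hli : LinearIndependent F u' := by
    refine Module.End.eigenvectors_linearIndependent' Tend xr hxrinj u' fun a => ?_
    refine ⟨?_, hu'ne a⟩
    rw [Module.End.mem_eigenspace_iff]
    exact hTu' a
  -- the basis indexed by `Fin p`
  have hFincast : ∀ k : Fin p, (((k : ℕ) : ZMod p)).val = (k : ℕ) :=
    fun k => ZMod.val_cast_of_lt k.isLt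
  set vFin : Fin p → V := fun k => u' ((k : ℕ) : ZMod p) with hvFdef
  have hFinj : Function.Injective (fun k : Fin p => ((k : ℕ) : ZMod p)) := by
    intro k j h
    apply Fin.ext
    rw [← hFincast k, ← hFincast j]
    exact congrArg ZMod.val h
  have hliF : LinearIndependent F vFin := hli.comp _ hFinj
  have hrangeeq : Set.range vFin = Set.range u' := by
    ext v
    constructor
    · rintro ⟨k, rfl⟩
      exact ⟨_, rfl⟩
    · rintro ⟨a, rfl⟩
      refine ⟨⟨a.val, a.val_lt⟩, ?_⟩
      rw [hvFdef]
      exact congrArg u' (ZMod.natCast_rightInverse a)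
  have hspanF : ⊤ ≤ Submodule.span F (Set.range vFin) := by
    rw [hrangeeq]
    exact fun v _ => hUtop v
  let b : Module.Basis (Fin p) F V := Module.Basis.mk hliF hspanF
  have hbk : ∀ k : Fin p, b k = vFin k := fun k => by rw [Module.Basis.mk_apply]
  have hfr : Module.finrank F V = p := by
    rw [Module.finrank_eq_card_basis b, Fintype.card_fin]
  -- assembling the statement
  set u : ℕ → V := fun k => u' ((k : ZMod p)) with hudef
  have husum : ∑ k ∈ Finset.range p, u k = ∑ a : ZMod p, u' a := by
    refine Finset.sum_nbij' (fun k => (k : ZMod p)) (fun a => a.val) ?_ ?_ ?_ ?_ ?_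
    · intro k _
      exact Finset.mem_univ _
    · intro a _
      exact Finset.mem_range.mpr a.val_lt
    · intro k hk
      exact ZMod.val_cast_of_lt (Finset.mem_range.mp hk)
    · intro a _
      exact ZMod.natCast_rightInverse a
    · intro k _
      rfl
  have hweig : ∀ f : F[X], aeval (waT F β) f • (∑ a : ZMod p, u' a)
      = ∑ a : ZMod p, f.eval (xr a) • u' a := by
    intro f
    rw [Finset.smul_sum]
    exact Finset.sum_congr rfl fun a _ => heig (xr a) (u' a) (hTu' a) f
  have hxk : ∀ k : ℕ, xr ((k : ZMod p)) = lam - (k : F) * β := by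
    intro k
    rw [hxrdef]
    simp only
    rw [hχnat k]
  have hsucc' : ∀ k : ℕ, ((k + 1 : ℕ) : ZMod p) = ((k : ZMod p)) + 1 := by
    intro k
    push_cast
    ring
  have hGσ : G = σp - C (lam ^ p - β ^ (p - 1) * lam) := by
    rw [hGdef, hσdef, hμdef]
  refine ⟨hfr, lam, u, ?_, ⟨b, fun k => hbk k⟩, ?_, ?_, ?_, ?_⟩
  · intro k
    have : ((k + p : ℕ) : ZMod p) = ((k : ZMod p)) := by
      push_cast [ZMod.natCast_self]
      ring
    show u' _ = u' _
    exact congrArg u' this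
  · intro k
    refine ⟨?_, ?_, ?_⟩
    · show waT F β • u' ((k : ZMod p)) = (lam - (k : F) * β) • u' ((k : ZMod p))
      rw [← hxk k]
      exact hTu' _
    · show waX F β • u' ((k : ZMod p)) = ζ • u' (((k + 1 : ℕ) : ZMod p))
      rw [hsucc' k]
      exact hXu' _
    · show waY F β • u' (((k + 1 : ℕ) : ZMod p))
          = (ζ⁻¹ * (lam - (k : F) * β)) • u' ((k : ZMod p))
      rw [hsucc' k, ← hxk k]
      exact hYu' _
  · intro v
    obtain ⟨c, hc⟩ := (Submodule.mem_span_range_iff_exists_fun F).mp (hUtop v)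
    refine ⟨∑ a : ZMod p, (c a * ((e a).eval (xr a))⁻¹) • aeval (waT F β) (e a), ?_⟩
    have hterm : ∀ a : ZMod p,
        ((c a * ((e a).eval (xr a))⁻¹) • aeval (waT F β) (e a)) • (∑ b : ZMod p, u' b)
          = c a • u' a := by
      intro a
      rw [smul_assoc, hweig (e a),
        Finset.sum_eq_single_of_mem a (Finset.mem_univ a)
          (fun b _ hb => by rw [heeval a b hb, zero_smul]),
        smul_smul, mul_assoc, inv_mul_cancel₀ (hediag a), mul_one]
    rw [husum, Finset.sum_smul, Finset.sum_congr rfl fun a _ => hterm a]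
    exact hc
  · rw [husum, Finset.smul_sum]
    have hre : ∑ a : ZMod p, u' (a + 1) = ∑ a : ZMod p, u' a :=
      Fintype.sum_equiv (Equiv.addRight 1) _ _ fun a => rfl
    calc ∑ a : ZMod p, waX F β • u' a = ∑ a : ZMod p, ζ • u' (a + 1) :=
          Finset.sum_congr rfl fun a _ => hXu' a
      _ = ζ • ∑ a : ZMod p, u' (a + 1) := (Finset.smul_sum).symm
      _ = ζ • ∑ a : ZMod p, u' a := by rw [hre]
  · intro f
    rw [husum, hweig f]
    constructor
    · intro h0
      have hall := Fintype.linearIndependent_iff.mp hli (fun a => f.eval (xr a)) h0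
      rw [Ideal.mem_span_singleton, ← hGσ, ← hPG]
      exact Finset.prod_dvd_of_coprime ((pairwise_coprime_X_sub_C hxrinj).set_pairwise _)
        fun a _ => dvd_iff_isRoot.mpr (hall a)
    · intro hf
      rw [Ideal.mem_span_singleton, ← hGσ, ← hPG] at hf
      obtain ⟨q, rfl⟩ := hf
      refine Finset.sum_eq_zero fun a _ => ?_
      rw [eval_mul, hPeval a, zero_mul, zero_smul]
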